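/- G₁ ≤ G₂ and G₃ ≤ G₂, where Gᵢ = 2∫₀¹ (p − Lᵢ(p)) dp, for any distribution F on (0,∞) with strictly positive quantile function. -/
import Mathlib


open Set MeasureTheory

private lemma aux_int (f : ℝ → ℝ) (hm : Measurable f)
    (hb : ∀ p ∈ Set.Ioc (0:ℝ) 1, |f p| ≤ 1) :
    IntervalIntegrable f MeasureTheory.volume 0 1 := by
  rw [intervalIntegrable_iff_integrableOn_Ioc_of_le (by norm_num : (0:ℝ) ≤ 1)]
  exact (integrable_const 1).mono' hm.aestronglyMeasurable.restrict
    ((ae_restrict_iff' measurableSet_Ioc).2 (Filter.Eventually.of_forall hb))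

/-- `G₁ ≤ G₂` and `G₃ ≤ G₂`, where `Gᵢ = 2∫₀¹ (p - Lᵢ(p)) dp`, for any distribution with
nondecreasing quantile function `Q` strictly positive on `(0,1)`. -/
theorem stmt_6 (Q : ℝ → ℝ) (hQmono : Monotone Q)
    (hQpos : ∀ p ∈ Set.Ioo (0 : ℝ) 1, 0 < Q p) :
    (2 * ∫ p in (0 : ℝ)..1, (p - p * Q (p / 2) / Q (1 / 2))) ≤
        (2 * ∫ p in (0 : ℝ)..1, (p - p * Q (p / 2) / Q (1 - p / 2))) ∧
    (2 * ∫ p in (0 : ℝ)..1,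
        (p - 2 * p * Q (p / 2) / (Q (p / 2) + Q (1 - p / 2)))) ≤
      (2 * ∫ p in (0 : ℝ)..1, (p - p * Q (p / 2) / Q (1 - p / 2))) := by
  have hQm : Measurable Q := hQmono.measurable
  have key : ∀ p ∈ Set.Ioc (0:ℝ) 1,
      0 < Q (p/2) ∧ Q (p/2) ≤ Q (1/2) ∧ Q (1/2) ≤ Q (1 - p/2) ∧ Q (p/2) ≤ Q (1 - p/2) := by
    intro p hp
    exact ⟨hQpos _ ⟨by linarith [hp.1], by linarith [hp.2]⟩,
      hQmono (by linarith [hp.2]), hQmono (by linarith [hp.2]), hQmono (by linarith [hp.2])⟩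
  have hc : 0 < Q (1/2) := hQpos _ (by norm_num)
  -- measurability of pieces
  have hmhalf : Measurable fun p : ℝ => Q (p/2) := hQm.comp (measurable_id.div_const 2)
  have hmrest : Measurable fun p : ℝ => Q (1 - p/2) :=
    hQm.comp (measurable_const.sub (measurable_id.div_const 2))
  have hm1 : Measurable fun p : ℝ => p - p * Q (p/2) / Q (1/2) :=
    measurable_id.sub ((measurable_id.mul hmhalf).div_const _)
  have hm2 : Measurable fun p : ℝ => p - p * Q (p/2) / Q (1 - p/2) :=
    measurable_id.sub ((measurable_id.mul hmhalf).div hmrest)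
  have hm3 : Measurable fun p : ℝ => p - 2 * p * Q (p/2) / (Q (p/2) + Q (1 - p/2)) :=
    measurable_id.sub (((measurable_const.mul measurable_id).mul hmhalf).div
      (hmhalf.add hmrest))
  -- integrability
  have hi1 : IntervalIntegrable (fun p : ℝ => p - p * Q (p/2) / Q (1/2))
      MeasureTheory.volume 0 1 := by
    refine aux_int _ hm1 fun p hp => ?_
    obtain ⟨ha, hac, hcb, hab⟩ := key p hp
    have h1 : 0 ≤ p * Q (p/2) / Q (1/2) :=
      div_nonneg (mul_nonneg hp.1.le ha.le) hc.le
    have h2 : p * Q (p/2) / Q (1/2) ≤ p := by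
      rw [div_le_iff₀ hc]
      nlinarith [hp.1.le]
    rw [abs_le]; constructor <;> nlinarith [hp.1.le, hp.2]
  have hi2 : IntervalIntegrable (fun p : ℝ => p - p * Q (p/2) / Q (1 - p/2))
      MeasureTheory.volume 0 1 := by
    refine aux_int _ hm2 fun p hp => ?_
    obtain ⟨ha, hac, hcb, hab⟩ := key p hp
    have hb : 0 < Q (1 - p/2) := lt_of_lt_of_le hc hcb
    have h1 : 0 ≤ p * Q (p/2) / Q (1 - p/2) :=
      div_nonneg (mul_nonneg hp.1.le ha.le) hb.le
    have h2 : p * Q (p/2) / Q (1 - p/2) ≤ p := by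
      rw [div_le_iff₀ hb]
      nlinarith [hp.1.le]
    rw [abs_le]; constructor <;> nlinarith [hp.1.le, hp.2]
  have hi3 : IntervalIntegrable (fun p : ℝ => p - 2 * p * Q (p/2) / (Q (p/2) + Q (1 - p/2)))
      MeasureTheory.volume 0 1 := by
    refine aux_int _ hm3 fun p hp => ?_
    obtain ⟨ha, hac, hcb, hab⟩ := key p hp
    have hb : 0 < Q (1 - p/2) := lt_of_lt_of_le hc hcb
    have hd : 0 < Q (p/2) + Q (1 - p/2) := by linarith
    have h1 : 0 ≤ 2 * p * Q (p/2) / (Q (p/2) + Q (1 - p/2)) :=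
      div_nonneg (by nlinarith [hp.1.le]) hd.le
    have h2 : 2 * p * Q (p/2) / (Q (p/2) + Q (1 - p/2)) ≤ p := by
      rw [div_le_iff₀ hd]
      nlinarith [hp.1.le]
    rw [abs_le]; constructor <;> nlinarith [hp.1.le, hp.2]
  constructor
  · refine mul_le_mul_of_nonneg_left ?_ (by norm_num)
    refine intervalIntegral.integral_mono_on (by norm_num) hi1 hi2 fun p hp => ?_
    rcases eq_or_lt_of_le hp.1 with h0 | h0
    · simp [← h0]
    obtain ⟨ha, hac, hcb, hab⟩ := key p ⟨h0, hp.2⟩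
    have hb : 0 < Q (1 - p/2) := lt_of_lt_of_le hc hcb
    have : p * Q (p/2) / Q (1 - p/2) ≤ p * Q (p/2) / Q (1/2) := by
      gcongr
    linarith
  · refine mul_le_mul_of_nonneg_left ?_ (by norm_num)
    refine intervalIntegral.integral_mono_on (by norm_num) hi3 hi2 fun p hp => ?_
    rcases eq_or_lt_of_le hp.1 with h0 | h0
    · simp [← h0]
    obtain ⟨ha, hac, hcb, hab⟩ := key p ⟨h0, hp.2⟩
    have hb : 0 < Q (1 - p/2) := lt_of_lt_of_le hc hcb
    have hd : 0 < Q (p/2) + Q (1 - p/2) := by linarith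
    have : p * Q (p/2) / Q (1 - p/2) ≤ 2 * p * Q (p/2) / (Q (p/2) + Q (1 - p/2)) := by
      rw [div_le_div_iff₀ hb hd]
      nlinarith [mul_nonneg (mul_nonneg h0.le ha.le) (sub_nonneg.2 hab)]
    linarith
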